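/- The bivariate generating function A(t,y) = Σ_{ν≥1} Σ_{n≥0} A_n^ν t^n y^ν of constant-weight (d,k,r)-sequences beginning with a one equals yt(1-t^{r+1}) / (1 - t - y t^{d+1} + y t^{k+2}) as a formal power series identity. -/

import Mathlib

/-- Weight of a binary sequence: number of ones. -/
def wt (l : List Bool) : ℕ := l.count true

/-- Length of the leading run of zeros. -/
def leadZeros (l : List Bool) : ℕ := (l.takeWhile (fun b => !b)).length

/-- Length of the trailing run of zeros. -/
def trailZeros (l : List Bool) : ℕ := (l.reverse.takeWhile (fun b => !b)).length

/-- Every internal run of zeros (between two consecutive ones) has length in `[d, k]`. -/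
def internalOK (d k : ℕ) (l : List Bool) : Prop :=
  ∀ i j : ℕ, i < j → j < l.length → l.getD i false = true → l.getD j false = true →
    (∀ m, i < m → m < j → l.getD m false = false) →
    d ≤ j - i - 1 ∧ j - i - 1 ≤ k

/-- NRZI charge accumulator: current bipolar level `z`, remaining bits. -/
def chargeAux : ℤ → List Bool → ℤ
  | _, [] => 0
  | z, b :: t => (if b then -z else z) + chargeAux (if b then -z else z) t

/-- NRZI charge (digital sum) of a binary sequence. -/
def charge (l : List Bool) : ℤ := chargeAux 1 l

/-- Number of (d,k,r)-sequences of length n and weight ν beginning with a one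
(the empty sequence is allowed, giving `A 0 0 = 1`). -/
noncomputable def Adkr (d k r n ν : ℕ) : ℕ :=
  Nat.card {l : List Bool // l.length = n ∧ (l ≠ [] → l.head? = some true) ∧
    internalOK d k l ∧ trailZeros l ≤ r ∧ wt l = ν}

/-- Number of (d,k,l,r)-sequences of length n and weight ν. -/
noncomputable def Adklr (d k L r n ν : ℕ) : ℕ :=
  Nat.card {x : List Bool // x.length = n ∧ leadZeros x ≤ L ∧
    internalOK d k x ∧ trailZeros x ≤ r ∧ wt x = ν}

/-- Number of (d,k,r)-sequences of length n beginning with a one, with NRZI charge σ. -/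
noncomputable def Cdkr (d k r n : ℕ) (σ : ℤ) : ℕ :=
  Nat.card {l : List Bool // l.length = n ∧ (l ≠ [] → l.head? = some true) ∧
    internalOK d k l ∧ trailZeros l ≤ r ∧ charge l = σ}

/-- Number of (d,k,l,r)-sequences of length n with NRZI charge σ. -/
noncomputable def Cdklr (d k L r n : ℕ) (σ : ℤ) : ℕ :=
  Nat.card {x : List Bool // x.length = n ∧ leadZeros x ≤ L ∧
    internalOK d k x ∧ trailZeros x ≤ r ∧ charge x = σ}

/-- Binomial coefficient with integer upper argument; zero when the upper argument is negative. -/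
def ibin (a : ℤ) (b : ℕ) : ℤ := if 0 ≤ a then (a.toNat.choose b : ℤ) else 0


def enc (a : ℕ) (l : List Bool) : List Bool := true :: (List.replicate a false ++ l)

lemma enc_length (a : ℕ) (l : List Bool) : (enc a l).length = a + 1 + l.length := by
  simp [enc]; omega

lemma enc_wt (a : ℕ) (l : List Bool) : wt (enc a l) = wt l + 1 := by
  simp [enc, wt, List.count_cons, List.count_append, List.count_replicate]

lemma takeWhile_append_stop {p : Bool → Bool} {l m : List Bool} (h : ∃ x ∈ l, p x = false) :
    (l ++ m).takeWhile p = l.takeWhile p := by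
  induction l with
  | nil => obtain ⟨x, hx, -⟩ := h; simp at hx
  | cons b t ih =>
    rcases h with ⟨x, hx, hpx⟩
    cases hb : p b with
    | false => simp [List.takeWhile_cons, hb]
    | true =>
      have ht : ∃ x ∈ t, p x = false := by
        rcases List.mem_cons.mp hx with rfl | h'
        · rw [hb] at hpx; cases hpx
        · exact ⟨x, h', hpx⟩
      simp [List.takeWhile_cons, hb, ih ht]

lemma trailZeros_enc (a : ℕ) {l : List Bool} (h : true ∈ l) :
    trailZeros (enc a l) = trailZeros l := by
  unfold trailZeros enc
  rw [List.reverse_cons, List.reverse_append, List.reverse_replicate, List.append_assoc]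
  rw [takeWhile_append_stop ⟨true, by simpa using h, rfl⟩]

lemma getD_replicate_false (a j : ℕ) : (List.replicate a false).getD j false = false := by
  rcases lt_or_ge j a with h | h
  · rw [List.getD_eq_getElem _ _ (by simpa using h)]; simp
  · rw [List.getD_eq_default _ _ (by simpa using h)]

lemma enc_getD (a : ℕ) (l : List Bool) (j : ℕ) :
    (enc a l).getD j false =
      if j = 0 then true else if j ≤ a then false else l.getD (j - (a+1)) false := by
  match j with
  | 0 => simp [enc]
  | j+1 =>
    simp only [enc, List.getD_cons_succ]
    rcases lt_or_ge j a with h | h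
    · rw [List.getD_append _ _ _ _ (by simpa using h), getD_replicate_false]
      simp [Nat.succ_le_of_lt h]
    · rw [List.getD_append_right _ _ _ _ (by simpa using h)]
      have : ¬ (j + 1 ≤ a) := by omega
      simp only [this, if_neg (Nat.succ_ne_zero j), if_false]
      congr 1
      simp only [List.length_replicate]; omega

lemma internalOK_of_wt_le_one {d k : ℕ} {l : List Bool} (h : wt l ≤ 1) : internalOK d k l := by
  intro i j hij hj hi' hj' _
  exfalso
  have hilen : i < l.length := hij.trans hj
  have hie : l[i]'hilen = true := by rw [← List.getD_eq_getElem l false hilen]; exact hi'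
  have hje : l[j]'hj = true := by rw [← List.getD_eq_getElem l false hj]; exact hj'
  have h1 : true ∈ l.take (i+1) := by
    have hlt : i < (l.take (i+1)).length := by simp; omega
    have : (l.take (i+1))[i]'hlt = true := by rw [List.getElem_take]; exact hie
    exact this ▸ List.getElem_mem hlt
  have h2 : true ∈ l.drop (i+1) := by
    have hlt : j - (i+1) < (l.drop (i+1)).length := by simp; omega
    have : (l.drop (i+1))[j - (i+1)]'hlt = true := by
      rw [List.getElem_drop]
      have : i + 1 + (j - (i+1)) = j := by omega
      simp_rw [this]; exact hje
    exact this ▸ List.getElem_mem hlt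
  have hcount : 2 ≤ wt l := by
    have e : l = l.take (i+1) ++ l.drop (i+1) := (List.take_append_drop _ _).symm
    have : wt l = (l.take (i+1)).count true + (l.drop (i+1)).count true := by
      conv_lhs => rw [wt, e]
      rw [List.count_append]
    rw [this]
    have c1 : 0 < (l.take (i+1)).count true := List.count_pos_iff.mpr h1
    have c2 : 0 < (l.drop (i+1)).count true := List.count_pos_iff.mpr h2
    omega
  omega

lemma internalOK_enc {d k a : ℕ} {l : List Bool} (hl : l.getD 0 false = true)
    (hlen : 0 < l.length) :
    internalOK d k (enc a l) ↔ d ≤ a ∧ a ≤ k ∧ internalOK d k l := by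
  constructor
  · intro H
    have ha := H 0 (a+1) (by omega) (by rw [enc_length]; omega)
      (by rw [enc_getD]; simp)
      (by rw [enc_getD, if_neg (by omega : ¬ a+1 = 0), if_neg (by omega : ¬ a+1 ≤ a), Nat.sub_self]; exact hl)
      (by intro m hm1 hm2; rw [enc_getD]; simp only [if_neg (by omega : ¬ m = 0)]
          rw [if_pos (by omega)])
    refine ⟨by omega, by omega, ?_⟩
    intro i j hij hj hi' hj' hbet
    have := H (a+1+i) (a+1+j) (by omega) (by rw [enc_length]; omega)
      (by rw [enc_getD]; simp only [if_neg (by omega : ¬ a+1+i = 0), if_neg (by omega : ¬ a+1+i ≤ a)]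
          simpa using hi')
      (by rw [enc_getD]; simp only [if_neg (by omega : ¬ a+1+j = 0), if_neg (by omega : ¬ a+1+j ≤ a)]
          simpa using hj')
      (by intro m hm1 hm2
          rw [enc_getD]
          simp only [if_neg (by omega : ¬ m = 0), if_neg (by omega : ¬ m ≤ a)]
          have := hbet (m - (a+1)) (by omega) (by omega)
          exact this)
    omega
  · rintro ⟨hd, hk', hok⟩ i j hij hjlen hi ht hbet
    rw [enc_length] at hjlen
    rw [enc_getD] at hi ht
    have hj0 : j ≠ 0 := by omega
    rw [if_neg hj0] at ht
    have hja : ¬ j ≤ a := by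
      intro h; rw [if_pos h] at ht; cases ht
    rw [if_neg hja] at ht
    by_cases hi0 : i = 0
    · subst hi0
      by_cases hj1 : j = a + 1
      · subst hj1; constructor <;> omega
      · exfalso
        have := hbet (a+1) (by omega) (by omega)
        rw [enc_getD, if_neg (by omega : ¬ a+1 = 0), if_neg (by omega : ¬ a+1 ≤ a)] at this
        rw [Nat.sub_self] at this
        rw [hl] at this; cases this
    · rw [if_neg hi0] at hi
      have hia : ¬ i ≤ a := by
        intro h; rw [if_pos h] at hi; cases hi
      rw [if_neg hia] at hi
      have := hok (i - (a+1)) (j - (a+1)) (by omega) (by omega) hi ht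
        (by intro m' hm1 hm2
            have := hbet (a+1+m') (by omega) (by omega)
            rw [enc_getD, if_neg (by omega : ¬ a+1+m' = 0), if_neg (by omega : ¬ a+1+m' ≤ a)] at this
            simpa using this)
      omega

lemma exists_enc {l : List Bool} (h1 : l.head? = some true) (h2 : 1 ≤ wt l - 1) :
    ∃ a l', l'.head? = some true ∧ l = enc a l' := by
  obtain ⟨t, rfl⟩ : ∃ t, l = true :: t := by
    cases l with
    | nil => simp at h1
    | cons b t => simp at h1; exact ⟨t, by rw [h1]⟩
  set p : Bool → Bool := fun b => !b with hp
  set a := (t.takeWhile p).length with halen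
  set l' := t.dropWhile p with hl'def
  have htw : t.takeWhile p = List.replicate a false := by
    rw [List.eq_replicate_iff]
    refine ⟨rfl, fun b hb => ?_⟩
    have := List.mem_takeWhile_imp hb
    simpa [hp] using this
  have hwt : 1 ≤ t.count true := by
    have : wt (true :: t) = t.count true + 1 := by simp [wt, List.count_cons]
    omega
  have hl'ne : l' ≠ [] := by
    intro h
    have ht2 : t = List.replicate a false := by
      conv_lhs => rw [← List.takeWhile_append_dropWhile (p := p) (l := t)]
      rw [← hl'def, h, List.append_nil, htw]
    rw [ht2] at hwt
    simp [List.count_replicate] at hwt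
  have hl'head : l'.head? = some true := by
    have hh := List.head?_dropWhile_not p t
    rw [← hl'def] at hh
    cases hxh : l'.head? with
    | none => exact absurd (List.head?_eq_none_iff.mp hxh) hl'ne
    | some x =>
      rw [hxh] at hh
      simp only [hp] at hh
      cases x
      · simp at hh
      · rfl
  refine ⟨a, l', hl'head, ?_⟩
  rw [enc]
  have : t = List.replicate a false ++ l' := by
    conv_lhs => rw [← List.takeWhile_append_dropWhile (p := p) (l := t), htw, ← hl'def]
  rw [← this]

lemma enc_inj {a₁ a₂ : ℕ} {l₁ l₂ : List Bool} (h1 : l₁.head? = some true)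
    (h2 : l₂.head? = some true) (h : enc a₁ l₁ = enc a₂ l₂) : a₁ = a₂ ∧ l₁ = l₂ := by
  rw [enc, enc, List.cons_eq_cons] at h
  obtain ⟨-, h⟩ := h
  set p : Bool → Bool := fun b => !b with hp
  have tw : ∀ (a : ℕ) (l : List Bool), l.head? = some true →
      (List.replicate a false ++ l).takeWhile p = List.replicate a false := by
    intro a l hl
    rw [List.takeWhile_append_of_pos (by intro x hx; simp [hp, List.eq_of_mem_replicate hx])]
    obtain ⟨t, rfl⟩ : ∃ t, l = true :: t := by
      cases l with
      | nil => simp at hl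
      | cons b t => simp at hl; exact ⟨t, by rw [hl]⟩
    simp [hp, List.takeWhile_cons]
  have ha : a₁ = a₂ := by
    have := congrArg (fun s => (List.takeWhile p s).length) h
    simpa [tw a₁ l₁ h1, tw a₂ l₂ h2] using this
  subst ha
  exact ⟨rfl, List.append_cancel_left h⟩


def okl (d k r n ν : ℕ) (l : List Bool) : Prop :=
  l.length = n ∧ (l ≠ [] → l.head? = some true) ∧
    internalOK d k l ∧ trailZeros l ≤ r ∧ wt l = ν

lemma Adkr_eq (d k r n ν : ℕ) : Adkr d k r n ν = Nat.card {l // okl d k r n ν l} := rfl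

lemma finite_okl (d k r n ν : ℕ) : Finite {l // okl d k r n ν l} := by
  have h : {l : List Bool | okl d k r n ν l}.Finite :=
    (List.finite_length_eq Bool n).subset (fun l hl => hl.1)
  exact h.to_subtype

lemma getD_zero_of_head {l : List Bool} (h : l.head? = some true) : l.getD 0 false = true := by
  cases l with
  | nil => simp at h
  | cons b t => simp at h; simp [h]

lemma mem_true_of_wt {l : List Bool} {w : ℕ} (h : wt l = w + 1) : true ∈ l :=
  List.count_pos_iff.mp (by rw [wt] at h; omega)

lemma Adkr_zero_len (d k r ν : ℕ) (hν : 1 ≤ ν) : Adkr d k r 0 ν = 0 := by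
  rw [Adkr_eq, Nat.card_eq_zero]
  left
  constructor
  rintro ⟨l, hlen, -, -, -, hwt⟩
  rw [List.length_eq_zero_iff] at hlen
  subst hlen
  simp [wt] at hwt
  omega

lemma trailZeros_true_replicate (b : ℕ) : trailZeros (true :: List.replicate b false) = b := by
  unfold trailZeros
  rw [List.reverse_cons, List.reverse_replicate,
    List.takeWhile_append_of_pos (by intro x hx; simp [List.eq_of_mem_replicate hx])]
  simp

lemma shape_of_wt_one {l : List Bool} (hh : l ≠ [] → l.head? = some true) (hw : wt l = 1) :
    l = true :: List.replicate (l.length - 1) false := by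
  have hne : l ≠ [] := by
    intro h; subst h; simp [wt] at hw
  obtain ⟨t, rfl⟩ : ∃ t, l = true :: t := by
    have := hh hne
    cases l with
    | nil => simp at this
    | cons b t => simp at this; exact ⟨t, by rw [this]⟩
  have ht : t.count true = 0 := by
    have : wt (true :: t) = t.count true + 1 := by simp [wt, List.count_cons]
    omega
  have : t = List.replicate t.length false := by
    rw [List.eq_replicate_iff]
    refine ⟨rfl, fun b hb => ?_⟩
    cases b
    · rfl
    · exact absurd hb (List.count_eq_zero.mp ht)
  simp only [List.length_cons, Nat.add_sub_cancel]
  rw [← this]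

lemma Adkr_one (d k r n : ℕ) : Adkr d k r n 1 = if 1 ≤ n ∧ n ≤ r + 1 then 1 else 0 := by
  split
  · rename_i hcond
    obtain ⟨h1, h2⟩ := hcond
    rw [Adkr_eq, Nat.card_eq_one_iff_unique]
    have hmem : okl d k r n 1 (true :: List.replicate (n-1) false) := by
      refine ⟨by simp; omega, fun _ => rfl, internalOK_of_wt_le_one (by simp [wt, List.count_replicate, List.count_cons]), ?_, by simp [wt, List.count_replicate, List.count_cons]⟩
      rw [trailZeros_true_replicate]; omega
    constructor
    · constructor
      rintro ⟨l, hl⟩ ⟨l', hl'⟩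
      have e1 := shape_of_wt_one hl.2.1 hl.2.2.2.2
      have e2 := shape_of_wt_one hl'.2.1 hl'.2.2.2.2
      apply Subtype.ext
      rw [hl.1] at e1
      rw [hl'.1] at e2
      exact e1.trans e2.symm
    · exact ⟨⟨_, hmem⟩⟩
  · rename_i hcond
    rw [Adkr_eq, Nat.card_eq_zero]
    left
    constructor
    rintro ⟨l, hlen, hh, -, htr, hwt⟩
    have e := shape_of_wt_one hh hwt
    have h1 : 1 ≤ n := by
      rw [e] at hlen; simp at hlen; omega
    rw [e, trailZeros_true_replicate, hlen] at htr
    exact hcond ⟨h1, by omega⟩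

lemma nat_card_sigma {ι : Type} [Fintype ι] (β : ι → Type) [∀ i, Finite (β i)] :
    Nat.card (Σ i, β i) = ∑ i, Nat.card (β i) := by
  letI : ∀ i, Fintype (β i) := fun i => Fintype.ofFinite _
  simp [Nat.card_eq_fintype_card, Fintype.card_sigma]

lemma Adkr_rec (d k r n ν : ℕ) :
    Adkr d k r n (ν + 2) = ∑ a ∈ Finset.Icc d k, Adkr d k r (n - (a+1)) (ν + 1) := by
  classical
  have key : ∀ m w, ∀ l : {l // okl d k r m (w+1) l},
      l.1 ≠ [] ∧ l.1.head? = some true ∧ true ∈ l.1 ∧ 1 ≤ m := by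
    rintro m w ⟨l, hlen, hh, -, -, hwt⟩
    have htrue : true ∈ l := mem_true_of_wt hwt
    have hne : l ≠ [] := by rintro rfl; simp at htrue
    exact ⟨hne, hh hne, htrue, by
      have : 0 < l.length := List.length_pos_iff.mpr hne
      omega⟩
  letI := fun a : ℕ => finite_okl d k r (n - (a+1)) (ν+1)
  letI := finite_okl d k r n (ν+2)
  have hmem : ∀ (a : ℕ), a ∈ Finset.Icc d k → ∀ l' : List Bool,
      okl d k r (n - (a+1)) (ν+1) l' → okl d k r n (ν+2) (enc a l') := by
    intro a ha l' hl'
    obtain ⟨hne, hhead, htrue, hm⟩ := key _ _ ⟨l', hl'⟩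
    obtain ⟨hlen, hh, hok, htr, hwt⟩ := hl'
    rw [Finset.mem_Icc] at ha
    have hn : a + 1 ≤ n := by omega
    refine ⟨by rw [enc_length, hlen]; omega, fun _ => rfl, ?_, ?_, by rw [enc_wt, hwt]⟩
    · exact (internalOK_enc (getD_zero_of_head hhead) (List.length_pos_iff.mpr hne)).mpr
        ⟨ha.1, ha.2, hok⟩
    · rw [trailZeros_enc _ htrue]; exact htr
  let f : (Σ a : (Finset.Icc d k : Finset ℕ), {l // okl d k r (n - ((a:ℕ)+1)) (ν+1) l}) →
      {l // okl d k r n (ν+2) l} :=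
    fun x => ⟨enc x.1.1 x.2.1, hmem x.1.1 x.1.2 x.2.1 x.2.2⟩
  have hbij : Function.Bijective f := by
    constructor
    · rintro ⟨⟨a₁, ha₁⟩, ⟨l₁, hl₁⟩⟩ ⟨⟨a₂, ha₂⟩, ⟨l₂, hl₂⟩⟩ heq
      have h1 := (key _ _ ⟨l₁, hl₁⟩).2.1
      have h2 := (key _ _ ⟨l₂, hl₂⟩).2.1
      have := enc_inj h1 h2 (congrArg Subtype.val heq)
      obtain ⟨rfl, rfl⟩ := this
      rfl
    · rintro ⟨l, hl⟩
      obtain ⟨hne, hhead, htrue, hn1⟩ := key _ _ ⟨l, hl⟩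
      obtain ⟨hlen, hh, hok, htr, hwt⟩ := hl
      obtain ⟨a, l', hl'head, rfl⟩ := exists_enc hhead (by rw [hwt]; omega)
      have hl'len : 0 < l'.length := by
        cases l' with
        | nil => simp at hl'head
        | cons b t => simp
      have := (internalOK_enc (getD_zero_of_head hl'head) hl'len).mp hok
      obtain ⟨hd, hk2, hok'⟩ := this
      have hwt' : wt l' = ν + 1 := by
        have := enc_wt a l'; omega
      have htrue' : true ∈ l' := mem_true_of_wt hwt'
      have hlen' : l'.length = n - (a + 1) := by
        rw [enc_length] at hlen; omega
      refine ⟨⟨⟨a, Finset.mem_Icc.mpr ⟨hd, hk2⟩⟩,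
        ⟨l', hlen', fun _ => hl'head, hok', ?_, hwt'⟩⟩, rfl⟩
      rw [← trailZeros_enc a htrue']; exact htr
  rw [Adkr_eq, ← Nat.card_eq_of_bijective f hbij, nat_card_sigma]
  rw [← Finset.sum_coe_sort (Finset.Icc d k) (fun a => Adkr d k r (n - (a+1)) (ν+1))]
  rfl

open MvPowerSeries in
noncomputable def mo (m : ℕ) : Fin 2 →₀ ℕ := Finsupp.single 0 m + Finsupp.single 1 1

lemma mo_apply0 (m : ℕ) : mo m 0 = m := by
  simp [mo, Finsupp.single_apply]

lemma mo_apply1 (m : ℕ) : mo m 1 = 1 := by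
  simp [mo, Finsupp.single_apply]

lemma mo_le (m : ℕ) (e : Fin 2 →₀ ℕ) : mo m ≤ e ↔ m ≤ e 0 ∧ 1 ≤ e 1 := by
  rw [Finsupp.le_def, Fin.forall_fin_two, mo_apply0, mo_apply1]

lemma mo_sub0 (m : ℕ) (e : Fin 2 →₀ ℕ) : (e - mo m) 0 = e 0 - m := by
  rw [Finsupp.tsub_apply, mo_apply0]

lemma mo_sub1 (m : ℕ) (e : Fin 2 →₀ ℕ) : (e - mo m) 1 = e 1 - 1 := by
  rw [Finsupp.tsub_apply, mo_apply1]

lemma mo_eq (m : ℕ) (e : Fin 2 →₀ ℕ) : e = mo m ↔ e 0 = m ∧ e 1 = 1 := by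
  rw [Finsupp.ext_iff, Fin.forall_fin_two, mo_apply0, mo_apply1]

lemma YT_pow (m : ℕ) : (MvPowerSeries.X 1 * MvPowerSeries.X 0 ^ m : MvPowerSeries (Fin 2) ℤ)
    = MvPowerSeries.monomial (mo m) (1:ℤ) := by
  rw [← pow_one (MvPowerSeries.X 1 : MvPowerSeries (Fin 2) ℤ), MvPowerSeries.X_pow_eq,
    MvPowerSeries.X_pow_eq, MvPowerSeries.monomial_mul_monomial, one_mul, mo, add_comm]

theorem stmt10 (d k r : ℕ) (hk : d ≤ k)
    (F : MvPowerSeries (Fin 2) ℤ)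
    (hF : ∀ e : Fin 2 →₀ ℕ,
      F e = if 1 ≤ e 1 then (Adkr d k r (e 0) (e 1) : ℤ) else 0) :
    (1 - MvPowerSeries.X 0 - MvPowerSeries.X 1 * MvPowerSeries.X 0 ^ (d + 1) +
        MvPowerSeries.X 1 * MvPowerSeries.X 0 ^ (k + 2)) * F =
      MvPowerSeries.X 1 * MvPowerSeries.X 0 * (1 - MvPowerSeries.X 0 ^ (r + 1)) := by
  classical
  set T : MvPowerSeries (Fin 2) ℤ := MvPowerSeries.X 0 with hT
  set Y : MvPowerSeries (Fin 2) ℤ := MvPowerSeries.X 1 with hY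
  set Q : MvPowerSeries (Fin 2) ℤ := ∑ b ∈ Finset.range (r+1), T ^ b with hQ
  set P : MvPowerSeries (Fin 2) ℤ := ∑ a ∈ Finset.Icc d k, T ^ (a+1) with hP
  have key : (1 - Y * P) * F = Y * T * Q := by
    apply MvPowerSeries.ext
    intro e
    have hYPF : (Y * P) * F = ∑ a ∈ Finset.Icc d k, (MvPowerSeries.monomial (mo (a+1)) 1) * F := by
      rw [hP, Finset.mul_sum, Finset.sum_mul]
      exact Finset.sum_congr rfl fun a _ => by rw [hY, hT, YT_pow]
    have hRHS : Y * T * Q = ∑ b ∈ Finset.range (r+1), (MvPowerSeries.monomial (mo (b+1)) 1 : MvPowerSeries (Fin 2) ℤ) := by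
      rw [hQ, Finset.mul_sum]
      refine Finset.sum_congr rfl fun b _ => ?_
      rw [mul_assoc, ← pow_succ', hY, hT, YT_pow]
    rw [sub_mul, one_mul, map_sub, hYPF, map_sum, hRHS, map_sum]
    have term1 : ∀ a : ℕ, (MvPowerSeries.coeff e) ((MvPowerSeries.monomial (mo (a+1)) 1) * F)
        = if a+1 ≤ e 0 ∧ 1 ≤ e 1 then
            (if 2 ≤ e 1 then (Adkr d k r (e 0 - (a+1)) (e 1 - 1) : ℤ) else 0) else 0 := by
      intro a
      rw [MvPowerSeries.coeff_monomial_mul, one_mul]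
      by_cases hle : mo (a+1) ≤ e
      · rw [if_pos hle, if_pos ((mo_le _ _).mp hle), MvPowerSeries.coeff_apply, hF,
          mo_sub0, mo_sub1]
        split_ifs with h1 h2 h2 <;> first | rfl | omega
      · rw [if_neg hle, if_neg (fun h => hle ((mo_le _ _).mpr h))]
    have term2 : ∀ b : ℕ, (MvPowerSeries.coeff e)
        ((MvPowerSeries.monomial (mo (b+1)) 1 : MvPowerSeries (Fin 2) ℤ))
        = if e 0 = b + 1 ∧ e 1 = 1 then 1 else 0 := by
      intro b
      rw [MvPowerSeries.coeff_monomial]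
      by_cases h : e = mo (b+1)
      · rw [if_pos h, if_pos ((mo_eq _ _).mp h)]
      · rw [if_neg h, if_neg (fun hc => h ((mo_eq _ _).mpr hc))]
    simp only [term1, term2]
    rw [MvPowerSeries.coeff_apply, hF]
    generalize e 0 = n
    generalize e 1 = ν
    match ν with
    | 0 => simp
    | 1 =>
      have h21 : ((2:ℕ) ≤ 1) = False := eq_false (by omega)
      have h11 : ((1:ℕ) ≤ 1) = True := eq_true le_rfl
      have he1 : ((1:ℕ) = 1) = True := eq_true rfl
      simp only [h21, h11, he1, if_false, if_true, ite_self, Finset.sum_const_zero, sub_zero,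
        and_true]
      by_cases hn : 1 ≤ n ∧ n ≤ r + 1
      · rw [Adkr_one, if_pos hn]
        rw [Finset.sum_eq_single_of_mem (n - 1) (Finset.mem_range.mpr (by omega))
          (fun b hb hbne => if_neg (by rw [Finset.mem_range] at hb; omega))]
        have hc : n = n - 1 + 1 := by omega
        rw [if_pos hc]
        norm_num
      · rw [Adkr_one, if_neg hn, Finset.sum_eq_zero]
        · norm_num
        · intro b hb
          rw [Finset.mem_range] at hb
          exact if_neg (by omega)
    | (w+2) =>
      have h1 : (1:ℕ) ≤ w + 2 := by omega
      have h2 : (2:ℕ) ≤ w + 2 := by omega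
      have h1' : ((1:ℕ) ≤ w + 2) = True := eq_true h1
      have h2' : ((2:ℕ) ≤ w + 2) = True := eq_true h2
      have hne1 : ((w + 2 : ℕ) = 1) = False := eq_false (by omega)
      simp only [h1', h2', hne1, if_true, if_false, and_false, and_true,
        Finset.sum_const_zero]
      have hterm : ∀ a ∈ Finset.Icc d k,
          (if a + 1 ≤ n then (Adkr d k r (n - (a+1)) (w + 2 - 1) : ℤ) else 0)
          = (Adkr d k r (n - (a+1)) (w+1) : ℤ) := by
        intro a ha
        by_cases hc : a + 1 ≤ n
        · rw [if_pos hc]; norm_num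
        · rw [if_neg hc]
          have hz : n - (a+1) = 0 := by omega
          rw [hz, Adkr_zero_len d k r (w+1) (by omega)]
          norm_num
      rw [Finset.sum_congr rfl hterm, sub_eq_zero, Adkr_rec d k r n w]
      push_cast
      rfl
  have hgQ : (1 - T) * Q = 1 - T ^ (r + 1) := by
    rw [hQ]
    linear_combination -(geom_sum_mul T (r + 1))
  have hgP : (1 - T) * P = T ^ (d + 1) - T ^ (k + 2) := by
    have hP2 : P = T ^ (d+1) * ∑ i ∈ Finset.range (k + 1 - d), T ^ i := by
      rw [hP, ← Finset.Ico_add_one_right_eq_Icc, Finset.sum_Ico_eq_sum_range, Finset.mul_sum]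
      refine Finset.sum_congr rfl fun i _ => ?_
      rw [← pow_add]
      congr 1
      omega
    have hpow : T ^ (d+1) * T ^ (k + 1 - d) = T ^ (k + 2) := by
      rw [← pow_add]
      congr 1
      omega
    linear_combination (1 - T) * hP2 - T ^ (d+1) * geom_sum_mul T (k + 1 - d) - hpow
  linear_combination (1 - T) * key + (Y * F) * hgP + (Y * T) * hgQ
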